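/- Consider the n × n symmetric matrix M(a) with diagonal entries d₁, …, d_{n−1}, a, last row/column off-diagonal entries a₁, …, a_{n−1} with |aᵢ| ≤ C, and zeros elsewhere. As |a| → ∞, the eigenvalues λ₁(a), …, λₙ(a) of M(a) satisfy λ_α(a) = d_α + o(1) for α ≤ n−1 and λₙ(a) = a(1 + O(1/a)), with error terms uniform in d₁, …, d_{n−1} and C. In particular, for every ε > 0 there exists R depending only on d₁, …, d_{n−1}, C, ε such that if |a| ≥ R then each of the n−1 'small' eigenvalues differs from the corresponding d_α by at most ε. -/

import Mathlib

open Real Finset Module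

private lemma apply_sum {n N : ℕ} (s : Finset (Fin N)) (w : Fin N → EuclideanSpace ℝ (Fin n))
    (k : Fin n) : (∑ i ∈ s, w i) k = ∑ i ∈ s, w i k := by
  induction s using Finset.cons_induction with
  | empty => rfl
  | cons a s ha ih => rw [Finset.sum_cons, Finset.sum_cons, ← ih]; rfl

lemma quad_eq {n : ℕ} {M : Matrix (Fin n) (Fin n) ℝ} (hM : M.IsHermitian)
    (v : EuclideanSpace ℝ (Fin n)) :
    ∑ i, v i * ∑ j, M i j * v j
      = ∑ i, hM.eigenvalues i * (inner ℝ (hM.eigenvectorBasis i) v : ℝ) ^ 2 := by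
  set u := hM.eigenvectorBasis with hu
  set μ := hM.eigenvalues with hμ
  set c : Fin n → ℝ := fun i => u.repr v i with hcdef
  have hc : ∀ i, (inner ℝ (u i) v : ℝ) = c i := fun i => (u.repr_apply_apply v i).symm
  have hv : ∀ k, v k = ∑ i, c i * u i k := by
    intro k
    conv_lhs => rw [← u.sum_repr v]
    rw [apply_sum]
    rfl
  have heig : ∀ i k, (∑ j, M k j * u i j) = μ i * u i k := by
    intro i k
    have := congrFun (hM.mulVec_eigenvectorBasis i) k
    simpa [Matrix.mulVec, dotProduct] using this
  have hinner : ∀ i, ∑ k, u i k * v k = c i := by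
    intro i
    rw [← hc i]
    simp only [PiLp.inner_apply, RCLike.inner_apply, RCLike.star_def, conj_trivial, mul_comm]
  have step2 : ∀ k, ∑ j, M k j * v j = ∑ i, c i * μ i * u i k := by
    intro k
    calc ∑ j, M k j * v j = ∑ j, ∑ i, c i * (M k j * u i j) := by
          refine sum_congr rfl fun j _ => ?_
          rw [hv j, Finset.mul_sum]
          exact sum_congr rfl fun i _ => by ring
      _ = ∑ i, ∑ j, c i * (M k j * u i j) := Finset.sum_comm
      _ = ∑ i, c i * μ i * u i k := by
          refine sum_congr rfl fun i _ => ?_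
          rw [← Finset.mul_sum, heig i k]; ring
  calc ∑ k, v k * ∑ j, M k j * v j
      = ∑ k, ∑ i, c i * μ i * (u i k * v k) := by
        refine sum_congr rfl fun k _ => ?_
        rw [step2 k, Finset.mul_sum]
        exact sum_congr rfl fun i _ => by ring
    _ = ∑ i, ∑ k, c i * μ i * (u i k * v k) := Finset.sum_comm
    _ = ∑ i, μ i * (inner ℝ (u i) v : ℝ) ^ 2 := by
        refine sum_congr rfl fun i _ => ?_
        rw [← Finset.mul_sum, hinner i, hc i]
        ring

lemma parseval {n : ℕ} {M : Matrix (Fin n) (Fin n) ℝ} (hM : M.IsHermitian)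
    (v : EuclideanSpace ℝ (Fin n)) :
    ‖v‖ ^ 2 = ∑ i, (inner ℝ (hM.eigenvectorBasis i) v : ℝ) ^ 2 := by
  set u := hM.eigenvectorBasis with hu
  have h1 : ‖v‖ = ‖u.repr v‖ := (u.repr.norm_map v).symm
  rw [h1, EuclideanSpace.norm_eq, Real.sq_sqrt (by positivity)]
  refine sum_congr rfl fun i _ => ?_
  rw [u.repr_apply_apply v i]
  simp [sq_abs]


-- inner vanishing on span
lemma inner_zero_of_span {n : ℕ} {s : Set (EuclideanSpace ℝ (Fin n))}
    {w v : EuclideanSpace ℝ (Fin n)} (h : ∀ x ∈ s, (inner ℝ w x : ℝ) = 0)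
    (hv : v ∈ Submodule.span ℝ s) : (inner ℝ w v : ℝ) = 0 := by
  induction hv using Submodule.span_induction with
  | mem x hx => exact h x hx
  | zero => simp
  | add x y _ _ hx hy => rw [inner_add_right, hx, hy, add_zero]
  | smul a x _ hx => rw [real_inner_smul_right, hx, mul_zero]

lemma finrank_span_orthonormal {n : ℕ} {w : Fin n → EuclideanSpace ℝ (Fin n)}
    (hw : Orthonormal ℝ w) (S : Finset (Fin n)) :
    finrank ℝ (Submodule.span ℝ (w '' ↑S)) = S.card := by
  have h1 : Orthonormal ℝ (w ∘ (Subtype.val : (↑(S : Set (Fin n))) → Fin n)) :=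
    hw.comp _ Subtype.val_injective
  have h2 := finrank_span_eq_card h1.linearIndependent
  rw [Set.range_comp, Subtype.range_coe] at h2
  simpa using h2

lemma exists_ne_zero_inf {n : ℕ} (V W : Submodule ℝ (EuclideanSpace ℝ (Fin n)))
    (h : n < finrank ℝ V + finrank ℝ W) : ∃ v, v ∈ V ∧ v ∈ W ∧ v ≠ 0 := by
  have hsup : finrank ℝ ↥(V ⊔ W) ≤ n := by
    simpa [finrank_euclideanSpace] using Submodule.finrank_le (V ⊔ W)
  have heq := Submodule.finrank_sup_add_finrank_inf_eq V W
  have hpos : 0 < finrank ℝ ↥(V ⊓ W) := by omega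
  have hne : V ⊓ W ≠ ⊥ := by
    intro hbot
    rw [hbot, finrank_bot] at hpos
    exact lt_irrefl 0 hpos
  obtain ⟨v, hv, hv0⟩ := Submodule.exists_mem_ne_zero_of_ne_bot hne
  exact ⟨v, hv.1, hv.2, hv0⟩

lemma exists_eigen_ge {n : ℕ} {M : Matrix (Fin n) (Fin n) ℝ} (hM : M.IsHermitian)
    (T S : Finset (Fin n)) (hcard : n < T.card + S.card) (t : ℝ)
    (hT : ∀ v : EuclideanSpace ℝ (Fin n), (∀ j, j ∉ T → v j = 0) →
       t * ‖v‖ ^ 2 ≤ ∑ i, v i * ∑ j, M i j * v j) :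
    ∃ i ∈ S, t ≤ hM.eigenvalues i := by
  by_contra hcon
  push_neg at hcon
  have heo : Orthonormal ℝ (fun j : Fin n => (EuclideanSpace.single j 1 : EuclideanSpace ℝ (Fin n))) := by
    rw [orthonormal_iff_ite]
    intro i j
    simp [EuclideanSpace.inner_single_left, EuclideanSpace.single_apply, eq_comm]
  obtain ⟨v, hvV, hvE, hv0⟩ :
      ∃ v, v ∈ Submodule.span ℝ ((fun j : Fin n => (EuclideanSpace.single j 1 : EuclideanSpace ℝ (Fin n))) '' ↑T)
        ∧ v ∈ Submodule.span ℝ ((fun i => (hM.eigenvectorBasis i : EuclideanSpace ℝ (Fin n))) '' ↑S)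
        ∧ v ≠ 0 := by
    apply exists_ne_zero_inf
    rw [finrank_span_orthonormal heo, finrank_span_orthonormal hM.eigenvectorBasis.orthonormal]
    exact hcard
  have hsupp : ∀ j, j ∉ T → v j = 0 := by
    intro j hj
    have h0 : (inner ℝ (EuclideanSpace.single j (1:ℝ)) v : ℝ) = 0 := by
      refine inner_zero_of_span ?_ hvV
      rintro x ⟨i, hi, rfl⟩
      have hij : i ≠ j := fun h => hj (h ▸ hi)
      have : (inner ℝ (EuclideanSpace.single j (1:ℝ)) (EuclideanSpace.single i (1:ℝ)) : ℝ)
          = if i = j then 1 else 0 := by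
        simp [EuclideanSpace.inner_single_left, EuclideanSpace.single_apply, eq_comm]
      rw [this, if_neg hij]
    rwa [EuclideanSpace.inner_single_left, conj_trivial, one_mul] at h0
  have hcoef : ∀ i, i ∉ S → (inner ℝ (hM.eigenvectorBasis i) v : ℝ) = 0 := by
    intro i hi
    refine inner_zero_of_span ?_ hvE
    rintro x ⟨i', hi', rfl⟩
    exact hM.eigenvectorBasis.orthonormal.2 (fun h => hi (h ▸ hi'))
  have hpar : ‖v‖ ^ 2 = ∑ i ∈ S, (inner ℝ (hM.eigenvectorBasis i) v : ℝ) ^ 2 := by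
    rw [parseval hM v]
    refine (Finset.sum_subset S.subset_univ (fun i _ hi => ?_)).symm
    rw [hcoef i hi]; ring
  have hquad : (∑ i, v i * ∑ j, M i j * v j)
      = ∑ i ∈ S, hM.eigenvalues i * (inner ℝ (hM.eigenvectorBasis i) v : ℝ) ^ 2 := by
    rw [quad_eq hM v]
    refine (Finset.sum_subset S.subset_univ (fun i _ hi => ?_)).symm
    rw [hcoef i hi]; ring
  have hnorm : 0 < ‖v‖ ^ 2 := by
    have : ‖v‖ ≠ 0 := norm_ne_zero_iff.mpr hv0
    positivity
  obtain ⟨i0, hi0S, hi00⟩ : ∃ i ∈ S, (inner ℝ (hM.eigenvectorBasis i) v : ℝ) ≠ 0 := by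
    by_contra hall
    push_neg at hall
    rw [hpar] at hnorm
    have h0 : ∑ i ∈ S, (inner ℝ (hM.eigenvectorBasis i) v : ℝ) ^ 2 = 0 :=
      Finset.sum_eq_zero fun i hi => by rw [hall i hi]; ring
    linarith
  have hlt : ∑ i ∈ S, hM.eigenvalues i * (inner ℝ (hM.eigenvectorBasis i) v : ℝ) ^ 2
      < ∑ i ∈ S, t * (inner ℝ (hM.eigenvectorBasis i) v : ℝ) ^ 2 := by
    refine Finset.sum_lt_sum (fun i hi => ?_) ⟨i0, hi0S, ?_⟩
    · exact mul_le_mul_of_nonneg_right (hcon i hi).le (sq_nonneg _)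
    · exact mul_lt_mul_of_pos_right (hcon i0 hi0S) (by positivity)
  have hTv := hT v hsupp
  rw [hquad] at hTv
  rw [← Finset.mul_sum, ← hpar] at hlt
  linarith

lemma exists_eigen_le {n : ℕ} {M : Matrix (Fin n) (Fin n) ℝ} (hM : M.IsHermitian)
    (T S : Finset (Fin n)) (hcard : n < T.card + S.card) (t : ℝ)
    (hT : ∀ v : EuclideanSpace ℝ (Fin n), (∀ j, j ∉ T → v j = 0) →
       (∑ i, v i * ∑ j, M i j * v j) ≤ t * ‖v‖ ^ 2) :
    ∃ i ∈ S, hM.eigenvalues i ≤ t := by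
  by_contra hcon
  push_neg at hcon
  have heo : Orthonormal ℝ (fun j : Fin n => (EuclideanSpace.single j 1 : EuclideanSpace ℝ (Fin n))) := by
    rw [orthonormal_iff_ite]
    intro i j
    simp [EuclideanSpace.inner_single_left, EuclideanSpace.single_apply, eq_comm]
  obtain ⟨v, hvV, hvE, hv0⟩ :
      ∃ v, v ∈ Submodule.span ℝ ((fun j : Fin n => (EuclideanSpace.single j 1 : EuclideanSpace ℝ (Fin n))) '' ↑T)
        ∧ v ∈ Submodule.span ℝ ((fun i => (hM.eigenvectorBasis i : EuclideanSpace ℝ (Fin n))) '' ↑S)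
        ∧ v ≠ 0 := by
    apply exists_ne_zero_inf
    rw [finrank_span_orthonormal heo, finrank_span_orthonormal hM.eigenvectorBasis.orthonormal]
    exact hcard
  have hsupp : ∀ j, j ∉ T → v j = 0 := by
    intro j hj
    have h0 : (inner ℝ (EuclideanSpace.single j (1:ℝ)) v : ℝ) = 0 := by
      refine inner_zero_of_span ?_ hvV
      rintro x ⟨i, hi, rfl⟩
      have hij : i ≠ j := fun h => hj (h ▸ hi)
      have : (inner ℝ (EuclideanSpace.single j (1:ℝ)) (EuclideanSpace.single i (1:ℝ)) : ℝ)
          = if i = j then 1 else 0 := by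
        simp [EuclideanSpace.inner_single_left, EuclideanSpace.single_apply, eq_comm]
      rw [this, if_neg hij]
    rwa [EuclideanSpace.inner_single_left, conj_trivial, one_mul] at h0
  have hcoef : ∀ i, i ∉ S → (inner ℝ (hM.eigenvectorBasis i) v : ℝ) = 0 := by
    intro i hi
    refine inner_zero_of_span ?_ hvE
    rintro x ⟨i', hi', rfl⟩
    exact hM.eigenvectorBasis.orthonormal.2 (fun h => hi (h ▸ hi'))
  have hpar : ‖v‖ ^ 2 = ∑ i ∈ S, (inner ℝ (hM.eigenvectorBasis i) v : ℝ) ^ 2 := by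
    rw [parseval hM v]
    refine (Finset.sum_subset S.subset_univ (fun i _ hi => ?_)).symm
    rw [hcoef i hi]; ring
  have hquad : (∑ i, v i * ∑ j, M i j * v j)
      = ∑ i ∈ S, hM.eigenvalues i * (inner ℝ (hM.eigenvectorBasis i) v : ℝ) ^ 2 := by
    rw [quad_eq hM v]
    refine (Finset.sum_subset S.subset_univ (fun i _ hi => ?_)).symm
    rw [hcoef i hi]; ring
  have hnorm : 0 < ‖v‖ ^ 2 := by
    have : ‖v‖ ≠ 0 := norm_ne_zero_iff.mpr hv0
    positivity
  obtain ⟨i0, hi0S, hi00⟩ : ∃ i ∈ S, (inner ℝ (hM.eigenvectorBasis i) v : ℝ) ≠ 0 := by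
    by_contra hall
    push_neg at hall
    rw [hpar] at hnorm
    have h0 : ∑ i ∈ S, (inner ℝ (hM.eigenvectorBasis i) v : ℝ) ^ 2 = 0 :=
      Finset.sum_eq_zero fun i hi => by rw [hall i hi]; ring
    linarith
  have hlt : ∑ i ∈ S, t * (inner ℝ (hM.eigenvectorBasis i) v : ℝ) ^ 2
      < ∑ i ∈ S, hM.eigenvalues i * (inner ℝ (hM.eigenvectorBasis i) v : ℝ) ^ 2 := by
    refine Finset.sum_lt_sum (fun i hi => ?_) ⟨i0, hi0S, ?_⟩
    · exact mul_le_mul_of_nonneg_right (hcon i hi).le (sq_nonneg _)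
    · exact mul_lt_mul_of_pos_right (hcon i0 hi0S) (by positivity)
  have hTv := hT v hsupp
  rw [hquad] at hTv
  rw [← Finset.mul_sum, ← hpar] at hlt
  linarith

set_option maxHeartbeats 2000000 in
theorem stmt16 (m : ℕ) (d : Fin m → ℝ) (hd : Antitone d) (C : ℝ) (hC : 0 < C)
    (ε : ℝ) (hε : 0 < ε) :
    ∃ R > (0 : ℝ), ∀ (a : ℝ) (av : Fin m → ℝ), (∀ i, |av i| ≤ C) → R ≤ |a| →
      ∀ hM : (Matrix.of fun i j : Fin (m + 1) =>
          Fin.lastCases (motive := fun _ => ℝ)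
            (Fin.lastCases (motive := fun _ => ℝ) a (fun j' : Fin m => av j') j)
            (fun i' => Fin.lastCases (motive := fun _ => ℝ) (av i')
              (fun j' => if i' = j' then d i' else 0) j) i).IsHermitian,
        ∃ σ : Equiv.Perm (Fin (m + 1)), ∀ α : Fin m,
          |hM.eigenvalues (σ α.castSucc) - d α| ≤ ε := by
  refine ⟨(∑ i, |d i|) + m * C ^ 2 / ε + 1, by positivity, ?_⟩
  intro a av hav haR hM
  set R : ℝ := (∑ i, |d i|) + m * C ^ 2 / ε + 1 with hRdef
  set A : Matrix (Fin (m+1)) (Fin (m+1)) ℝ := Matrix.of fun i j : Fin (m + 1) =>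
          Fin.lastCases (motive := fun _ => ℝ)
            (Fin.lastCases (motive := fun _ => ℝ) a (fun j' : Fin m => av j') j)
            (fun i' => Fin.lastCases (motive := fun _ => ℝ) (av i')
              (fun j' => if i' = j' then d i' else 0) j) i with hAdef
  set μ : Fin (m+1) → ℝ := hM.eigenvalues with hμdef
  set τ : Equiv.Perm (Fin (m+1)) := Tuple.sort μ with hτdef
  have hmono : Monotone (μ ∘ τ) := Tuple.monotone_sort μ
  -- entries
  have hAcc : ∀ i j : Fin m, A i.castSucc j.castSucc = if i = j then d i else 0 := by
    intro i j; simp [hAdef]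
  have hAcl : ∀ i : Fin m, A i.castSucc (Fin.last m) = av i := by
    intro i; simp [hAdef]
  have hAlc : ∀ j : Fin m, A (Fin.last m) j.castSucc = av j := by
    intro j; simp [hAdef]
  have hAll : A (Fin.last m) (Fin.last m) = a := by simp [hAdef]
  -- quadratic form expansion
  have hQ : ∀ v : EuclideanSpace ℝ (Fin (m+1)),
      (∑ i, v i * ∑ j, A i j * v j)
        = (∑ i : Fin m, d i * v i.castSucc ^ 2)
          + 2 * v (Fin.last m) * (∑ i : Fin m, av i * v i.castSucc)
          + a * v (Fin.last m) ^ 2 := by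
    intro v
    have hrow : ∀ i : Fin m, (∑ j, A i.castSucc j * v j)
        = d i * v i.castSucc + av i * v (Fin.last m) := by
      intro i
      rw [Fin.sum_univ_castSucc]
      simp only [hAcc, hAcl]
      rw [Finset.sum_congr rfl (fun j _ => by rw [ite_mul, zero_mul] : ∀ j ∈ univ,
        (if i = j then d i else 0) * v j.castSucc = if i = j then d i * v j.castSucc else 0)]
      rw [Finset.sum_ite_eq]
      simp
    have hlast : (∑ j, A (Fin.last m) j * v j)
        = (∑ j : Fin m, av j * v j.castSucc) + a * v (Fin.last m) := by
      rw [Fin.sum_univ_castSucc]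
      simp only [hAlc, hAll]
    rw [Fin.sum_univ_castSucc]
    simp only [hrow, hlast]
    have : ∀ i : Fin m, v i.castSucc * (d i * v i.castSucc + av i * v (Fin.last m))
        = d i * v i.castSucc ^ 2 + v (Fin.last m) * (av i * v i.castSucc) := by
      intro i; ring
    rw [Finset.sum_congr rfl (fun i _ => this i), Finset.sum_add_distrib, ← Finset.mul_sum]
    ring
  -- norm expansion
  have hN : ∀ v : EuclideanSpace ℝ (Fin (m+1)),
      ‖v‖ ^ 2 = (∑ i : Fin m, v i.castSucc ^ 2) + v (Fin.last m) ^ 2 := by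
    intro v
    rw [EuclideanSpace.norm_eq, Real.sq_sqrt (by positivity)]
    rw [Fin.sum_univ_castSucc]
    simp [sq_abs]
  have hdsum : ∀ α : Fin m, d α ≤ ∑ i, |d i| := by
    intro α
    calc d α ≤ |d α| := le_abs_self _
      _ ≤ ∑ i, |d i| := Finset.single_le_sum (f := fun i => |d i|) (fun i _ => abs_nonneg _) (mem_univ α)
  have hdsum' : ∀ α : Fin m, -(∑ i, |d i|) ≤ d α := by
    intro α
    calc -(∑ i, |d i|) ≤ -|d α| :=
          neg_le_neg (Finset.single_le_sum (f := fun i => |d i|) (fun i _ => abs_nonneg _) (mem_univ α))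
      _ ≤ d α := neg_abs_le _
  -- support helpers
  have hsuppIic : ∀ (α : Fin m) (v : EuclideanSpace ℝ (Fin (m+1))),
      (∀ j, j ∉ (Finset.Iic α).image Fin.castSucc ∪ {Fin.last m} → v j = 0) →
      (∀ i : Fin m, α < i → v i.castSucc = 0) := by
    intro α v hv i hi
    apply hv
    simp only [Finset.mem_union, Finset.mem_image, Finset.mem_singleton, Finset.mem_Iic]
    push_neg
    constructor
    · rintro x hx hxe
      exact absurd (Fin.castSucc_injective m hxe ▸ hx) (not_le.mpr hi)
    · exact (Fin.castSucc_lt_last i).ne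
  have hsuppIci : ∀ (α : Fin m) (v : EuclideanSpace ℝ (Fin (m+1))),
      (∀ j, j ∉ (Finset.Ici α).image Fin.castSucc ∪ {Fin.last m} → v j = 0) →
      (∀ i : Fin m, i < α → v i.castSucc = 0) := by
    intro α v hv i hi
    apply hv
    simp only [Finset.mem_union, Finset.mem_image, Finset.mem_singleton, Finset.mem_Ici]
    push_neg
    constructor
    · rintro x hx hxe
      exact absurd (Fin.castSucc_injective m hxe ▸ hx) (not_le.mpr hi)
    · exact (Fin.castSucc_lt_last i).ne
  have hlastnot : ∀ s : Finset (Fin m), Fin.last m ∉ s.image Fin.castSucc := by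
    intro s h
    obtain ⟨x, _, hx⟩ := Finset.mem_image.mp h
    exact (Fin.castSucc_lt_last x).ne hx
  have hsupp2 : ∀ (s : Finset (Fin m)) (v : EuclideanSpace ℝ (Fin (m+1))),
      (∀ j, j ∉ s.image Fin.castSucc → v j = 0) →
      v (Fin.last m) = 0 ∧ ∀ i : Fin m, i ∉ s → v i.castSucc = 0 := by
    intro s v hv
    refine ⟨hv _ (hlastnot s), fun i hi => hv _ ?_⟩
    intro h
    obtain ⟨x, hx, hxe⟩ := Finset.mem_image.mp h
    exact hi (Fin.castSucc_injective m hxe ▸ hx)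
  -- cross term bound
  have hcross : ∀ (L : ℝ) (v' : Fin m → ℝ),
      -(ε * (∑ i, v' i ^ 2) + m * (C ^ 2 / ε) * L ^ 2) ≤ 2 * L * (∑ i, av i * v' i) := by
    intro L v'
    have hterm : ∀ i : Fin m, -(ε * v' i ^ 2 + C ^ 2 / ε * L ^ 2) ≤ 2 * L * (av i * v' i) := by
      intro i
      have h1 : av i ^ 2 ≤ C ^ 2 := by
        have := abs_le.mp (hav i)
        nlinarith [this.1, this.2]
      have h2 : 0 ≤ (ε * v' i + av i * L) ^ 2 := sq_nonneg _
      have h3 : 0 ≤ (C ^ 2 - av i ^ 2) * L ^ 2 := mul_nonneg (by linarith) (sq_nonneg _)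
      have h4 : C ^ 2 / ε * ε = C ^ 2 := div_mul_cancel₀ _ hε.ne'
      nlinarith [h2, h3, h4, hε, mul_pos hε hε]
    calc -(ε * (∑ i, v' i ^ 2) + m * (C ^ 2 / ε) * L ^ 2)
        = ∑ i : Fin m, -(ε * v' i ^ 2 + C ^ 2 / ε * L ^ 2) := by
          rw [Finset.sum_neg_distrib, Finset.sum_add_distrib, ← Finset.mul_sum,
            Finset.sum_const, Finset.card_univ, Fintype.card_fin]
          ring_nf
      _ ≤ ∑ i : Fin m, 2 * L * (av i * v' i) := Finset.sum_le_sum (fun i _ => hterm i)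
      _ = 2 * L * (∑ i, av i * v' i) := by rw [Finset.mul_sum]
  -- (i) interlacing upper, unconditional
  have bound_up : ∀ α : Fin m, μ (τ ⟨m - 1 - ↑α, by omega⟩) ≤ d α := by
    intro α
    have hcard : m + 1 < ((Finset.Ici α).image Fin.castSucc).card
        + ((Finset.Ici (⟨m - 1 - ↑α, by omega⟩ : Fin (m+1))).image τ).card := by
      rw [Finset.card_image_of_injective _ (Fin.castSucc_injective m),
        Finset.card_image_of_injective _ τ.injective, Fin.card_Ici, Fin.card_Ici]
      have := α.isLt; simp only [Fin.val_mk]; omega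
    have hbd : ∀ v : EuclideanSpace ℝ (Fin (m+1)),
        (∀ j, j ∉ (Finset.Ici α).image Fin.castSucc → v j = 0) →
        (∑ i, v i * ∑ j, A i j * v j) ≤ d α * ‖v‖ ^ 2 := by
      intro v hv
      obtain ⟨hL, hsm⟩ := hsupp2 (Finset.Ici α) v hv
      rw [hQ v, hN v, hL]
      have hA : ∑ i, d i * v i.castSucc ^ 2 ≤ d α * ∑ i : Fin m, v i.castSucc ^ 2 := by
        rw [Finset.mul_sum]
        refine Finset.sum_le_sum (fun i _ => ?_)
        rcases le_or_gt α i with h | h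
        · exact mul_le_mul_of_nonneg_right (hd h) (sq_nonneg _)
        · rw [hsm i (by simp [Finset.mem_Ici, not_le.mpr h])]
          simp
      nlinarith [hA]
    obtain ⟨i, hiS, hile⟩ := exists_eigen_le hM _ _ hcard (d α) hbd
    obtain ⟨j', hj', rfl⟩ := Finset.mem_image.mp hiS
    exact le_trans (hmono (Finset.mem_Ici.mp hj')) hile
  -- (iii) interlacing lower, unconditional
  have bound_low : ∀ α : Fin m, d α ≤ μ (τ ⟨m - ↑α, by omega⟩) := by
    intro α
    have hcard : m + 1 < ((Finset.Iic α).image Fin.castSucc).card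
        + ((Finset.Iic (⟨m - ↑α, by omega⟩ : Fin (m+1))).image τ).card := by
      rw [Finset.card_image_of_injective _ (Fin.castSucc_injective m),
        Finset.card_image_of_injective _ τ.injective, Fin.card_Iic, Fin.card_Iic]
      have := α.isLt; simp only [Fin.val_mk]; omega
    have hbd : ∀ v : EuclideanSpace ℝ (Fin (m+1)),
        (∀ j, j ∉ (Finset.Iic α).image Fin.castSucc → v j = 0) →
        d α * ‖v‖ ^ 2 ≤ ∑ i, v i * ∑ j, A i j * v j := by
      intro v hv
      obtain ⟨hL, hsm⟩ := hsupp2 (Finset.Iic α) v hv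
      rw [hQ v, hN v, hL]
      have hA : d α * ∑ i : Fin m, v i.castSucc ^ 2 ≤ ∑ i, d i * v i.castSucc ^ 2 := by
        rw [Finset.mul_sum]
        refine Finset.sum_le_sum (fun i _ => ?_)
        rcases le_or_gt i α with h | h
        · exact mul_le_mul_of_nonneg_right (hd h) (sq_nonneg _)
        · rw [hsm i (by simp [Finset.mem_Iic, not_le.mpr h])]
          simp
      nlinarith [hA]
    obtain ⟨i, hiS, hile⟩ := exists_eigen_ge hM _ _ hcard (d α) hbd
    obtain ⟨j', hj', rfl⟩ := Finset.mem_image.mp hiS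
    exact le_trans hile (hmono (Finset.mem_Iic.mp hj'))
  -- (ii) for a ≥ R
  have bound_low' : R ≤ a → ∀ α : Fin m, d α - ε ≤ μ (τ ⟨m - 1 - ↑α, by omega⟩) := by
    intro ha α
    have hcard : m + 1 < (((Finset.Iic α).image Fin.castSucc) ∪ {Fin.last m}).card
        + ((Finset.Iic (⟨m - 1 - ↑α, by omega⟩ : Fin (m+1))).image τ).card := by
      rw [Finset.card_union_of_disjoint (by simpa using hlastnot (Finset.Iic α)),
        Finset.card_image_of_injective _ (Fin.castSucc_injective m),
        Finset.card_image_of_injective _ τ.injective, Fin.card_Iic, Fin.card_Iic,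
        Finset.card_singleton]
      have := α.isLt; simp only [Fin.val_mk]; omega
    have hbd : ∀ v : EuclideanSpace ℝ (Fin (m+1)),
        (∀ j, j ∉ ((Finset.Iic α).image Fin.castSucc) ∪ {Fin.last m} → v j = 0) →
        (d α - ε) * ‖v‖ ^ 2 ≤ ∑ i, v i * ∑ j, A i j * v j := by
      intro v hv
      have hsm := hsuppIic α v hv
      rw [hQ v, hN v]
      have hA : d α * ∑ i : Fin m, v i.castSucc ^ 2 ≤ ∑ i, d i * v i.castSucc ^ 2 := by
        rw [Finset.mul_sum]
        refine Finset.sum_le_sum (fun i _ => ?_)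
        rcases le_or_gt i α with h | h
        · exact mul_le_mul_of_nonneg_right (hd h) (sq_nonneg _)
        · rw [hsm i h]; simp
      have hB := hcross (v (Fin.last m)) (fun i => v i.castSucc)
      have ha' : d α - ε + ↑m * (C ^ 2 / ε) ≤ a := by
        have h3 := hdsum α
        have h4 : (↑m : ℝ) * (C ^ 2 / ε) = ↑m * C ^ 2 / ε := by ring
        rw [hRdef] at ha
        linarith
      have hL2 : (d α - ε + ↑m * (C ^ 2 / ε)) * v (Fin.last m) ^ 2
          ≤ a * v (Fin.last m) ^ 2 := mul_le_mul_of_nonneg_right ha' (sq_nonneg _)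
      nlinarith [hA, hB, hL2]
    obtain ⟨i, hiS, hile⟩ := exists_eigen_ge hM _ _ hcard (d α - ε) hbd
    obtain ⟨j', hj', rfl⟩ := Finset.mem_image.mp hiS
    exact le_trans hile (hmono (Finset.mem_Iic.mp hj'))
  -- (iv) for a ≤ -R
  have bound_up' : a ≤ -R → ∀ α : Fin m, μ (τ ⟨m - ↑α, by omega⟩) ≤ d α + ε := by
    intro ha α
    have hcard : m + 1 < (((Finset.Ici α).image Fin.castSucc) ∪ {Fin.last m}).card
        + ((Finset.Ici (⟨m - ↑α, by omega⟩ : Fin (m+1))).image τ).card := by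
      rw [Finset.card_union_of_disjoint (by simpa using hlastnot (Finset.Ici α)),
        Finset.card_image_of_injective _ (Fin.castSucc_injective m),
        Finset.card_image_of_injective _ τ.injective, Fin.card_Ici, Fin.card_Ici,
        Finset.card_singleton]
      have := α.isLt; simp only [Fin.val_mk]; omega
    have hbd : ∀ v : EuclideanSpace ℝ (Fin (m+1)),
        (∀ j, j ∉ ((Finset.Ici α).image Fin.castSucc) ∪ {Fin.last m} → v j = 0) →
        (∑ i, v i * ∑ j, A i j * v j) ≤ (d α + ε) * ‖v‖ ^ 2 := by
      intro v hv
      have hsm := hsuppIci α v hv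
      rw [hQ v, hN v]
      have hA : ∑ i, d i * v i.castSucc ^ 2 ≤ d α * ∑ i : Fin m, v i.castSucc ^ 2 := by
        rw [Finset.mul_sum]
        refine Finset.sum_le_sum (fun i _ => ?_)
        rcases lt_or_ge i α with h | h
        · rw [hsm i h]; simp
        · exact mul_le_mul_of_nonneg_right (hd h) (sq_nonneg _)
      have hB := hcross (-(v (Fin.last m))) (fun i => v i.castSucc)
      have ha' : a ≤ d α + ε - ↑m * (C ^ 2 / ε) := by
        have h3 := hdsum' α
        have h4 : (↑m : ℝ) * (C ^ 2 / ε) = ↑m * C ^ 2 / ε := by ring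
        rw [hRdef] at ha
        linarith
      have hL2 : a * v (Fin.last m) ^ 2
          ≤ (d α + ε - ↑m * (C ^ 2 / ε)) * v (Fin.last m) ^ 2 :=
        mul_le_mul_of_nonneg_right ha' (sq_nonneg _)
      nlinarith [hA, hB, hL2]
    obtain ⟨i, hiS, hile⟩ := exists_eigen_le hM _ _ hcard (d α + ε) hbd
    obtain ⟨j', hj', rfl⟩ := Finset.mem_image.mp hiS
    exact le_trans (hmono (Finset.mem_Ici.mp hj')) hile
  rcases le_or_gt 0 a with hsign | hsign
  · -- case a ≥ R
    have ha : R ≤ a := by rwa [abs_of_nonneg hsign] at haR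
    set g : Fin (m+1) → Fin (m+1) := fun i =>
      Fin.lastCases (motive := fun _ => Fin (m+1)) (τ (Fin.last m))
        (fun β : Fin m => τ ⟨m - 1 - ↑β, by omega⟩) i with hgdef
    have hg1 : ∀ β : Fin m, g β.castSucc = τ ⟨m - 1 - ↑β, by omega⟩ := by
      intro β
      rw [hgdef]
      exact Fin.lastCases_castSucc ..
    have hg2 : g (Fin.last m) = τ (Fin.last m) := by
      rw [hgdef]
      exact Fin.lastCases_last ..
    have hinj : Function.Injective g := by
      intro i1 i2 h
      rcases Fin.eq_castSucc_or_eq_last i1 with ⟨β1, rfl⟩ | rfl <;>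
        rcases Fin.eq_castSucc_or_eq_last i2 with ⟨β2, rfl⟩ | rfl
      · rw [hg1, hg1] at h
        have h3 := β1.isLt
        have h4 := β2.isLt
        have : (β1 : ℕ) = β2 := by
          have := (Fin.val_eq_val _ _).mpr (τ.injective h)
          simp only [Fin.val_mk] at this
          omega
        exact congrArg Fin.castSucc (Fin.ext this)
      · rw [hg1, hg2] at h
        have h2 := (Fin.val_eq_val _ _).mpr (τ.injective h)
        have h3 := β1.isLt
        simp only [Fin.val_mk, Fin.val_last] at h2
        omega
      · rw [hg2, hg1] at h
        have h2 := (Fin.val_eq_val _ _).mpr (τ.injective h)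
        have h3 := β2.isLt
        simp only [Fin.val_mk, Fin.val_last] at h2
        omega
      · rfl
    refine ⟨Equiv.ofBijective g (Finite.injective_iff_bijective.mp hinj), fun α => ?_⟩
    have hs : (Equiv.ofBijective g (Finite.injective_iff_bijective.mp hinj)) α.castSucc
        = τ ⟨m - 1 - ↑α, by omega⟩ := hg1 α
    rw [hs, abs_le]
    constructor
    · linarith [bound_low' ha α]
    · linarith [bound_up α]
  · -- case a ≤ -R
    have ha : a ≤ -R := by
      rw [abs_of_neg hsign] at haR
      linarith
    set g : Fin (m+1) → Fin (m+1) := fun i =>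
      Fin.lastCases (motive := fun _ => Fin (m+1)) (τ ⟨0, by omega⟩)
        (fun β : Fin m => τ ⟨m - ↑β, by omega⟩) i with hgdef
    have hg1 : ∀ β : Fin m, g β.castSucc = τ ⟨m - ↑β, by omega⟩ := by
      intro β
      rw [hgdef]
      exact Fin.lastCases_castSucc ..
    have hg2 : g (Fin.last m) = τ ⟨0, by omega⟩ := by
      rw [hgdef]
      exact Fin.lastCases_last ..
    have hinj : Function.Injective g := by
      intro i1 i2 h
      rcases Fin.eq_castSucc_or_eq_last i1 with ⟨β1, rfl⟩ | rfl <;>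
        rcases Fin.eq_castSucc_or_eq_last i2 with ⟨β2, rfl⟩ | rfl
      · rw [hg1, hg1] at h
        have h3 := β1.isLt
        have h4 := β2.isLt
        have : (β1 : ℕ) = β2 := by
          have := (Fin.val_eq_val _ _).mpr (τ.injective h)
          simp only [Fin.val_mk] at this
          omega
        exact congrArg Fin.castSucc (Fin.ext this)
      · rw [hg1, hg2] at h
        have h2 := (Fin.val_eq_val _ _).mpr (τ.injective h)
        have h3 := β1.isLt
        simp only [Fin.val_mk] at h2
        omega
      · rw [hg2, hg1] at h
        have h2 := (Fin.val_eq_val _ _).mpr (τ.injective h)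
        have h3 := β2.isLt
        simp only [Fin.val_mk] at h2
        omega
      · rfl
    refine ⟨Equiv.ofBijective g (Finite.injective_iff_bijective.mp hinj), fun α => ?_⟩
    have hs : (Equiv.ofBijective g (Finite.injective_iff_bijective.mp hinj)) α.castSucc
        = τ ⟨m - ↑α, by omega⟩ := hg1 α
    rw [hs, abs_le]
    constructor
    · linarith [bound_low α]
    · linarith [bound_up' ha α]
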